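/- arXiv:1510.06095 — 2 statements merged into one kernel-verified Lean document; each statement's English description precedes it below -/
import Mathlib

section
/- Let Ψ : [0,∞) → [0,∞) be continuous with Ψ(0) = 0 and Ψ(σ²) ≤ V·σ²/(V+σ²) for all σ², where V > 0. Fix β > 0. Then for N₀ = 0, the state-evolution sequence defined by σ₁² = β·V and σ_{t+1}² = β·Ψ(σ_t²) satisfies: if β < β_max := inf_{σ²>0} σ²/Ψ(σ²), then σ_t² → 0 as t → ∞ (perfect recovery), assuming additionally that Ψ is nondecreasing. -/
open Filter

/-- Noiseless state evolution below the exact recovery threshold converges to zero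
effective noise variance (perfect recovery). -/
theorem noiseless_state_evolution_perfect_recovery
    (Ψ : ℝ → ℝ) (hcont : ContinuousOn Ψ (Set.Ici 0))
    (hnonneg : ∀ x ∈ Set.Ici (0 : ℝ), 0 ≤ Ψ x)
    (hΨ0 : Ψ 0 = 0)
    (V : ℝ) (hV : 0 < V)
    (hbound : ∀ x ∈ Set.Ici (0 : ℝ), Ψ x ≤ V * x / (V + x))
    (hmono : ∀ x y, 0 ≤ x → x ≤ y → Ψ x ≤ Ψ y)
    (β : ℝ) (hβ : 0 < β)
    (βmax : ENNReal)
    (hβmax : βmax = ⨅ x ∈ Set.Ioi (0 : ℝ),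
      (if Ψ x = 0 then ⊤ else ENNReal.ofReal (x / Ψ x)))
    (hβlt : ENNReal.ofReal β < βmax)
    (s : ℕ → ℝ) (hs1 : s 1 = β * V)
    (hrec : ∀ t ≥ 1, s (t + 1) = β * Ψ (s t)) :
    Tendsto (fun t => s t) atTop (nhds 0) := by
  have key : ∀ x > (0:ℝ), β * Ψ x < x := by
    intro x hx
    have hle : βmax ≤ (if Ψ x = 0 then ⊤ else ENNReal.ofReal (x / Ψ x)) := by
      rw [hβmax]
      exact biInf_le _ hx
    have hlt := lt_of_lt_of_le hβlt hle
    by_cases h0 : Ψ x = 0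
    · rw [h0, mul_zero]; exact hx
    · rw [if_neg h0] at hlt
      have hΨpos : 0 < Ψ x := lt_of_le_of_ne (hnonneg x (le_of_lt hx)) (Ne.symm h0)
      have hdiv : 0 < x / Ψ x := div_pos hx hΨpos
      rw [ENNReal.ofReal_lt_ofReal_iff hdiv] at hlt
      calc β * Ψ x < (x / Ψ x) * Ψ x := by nlinarith
        _ = x := div_mul_cancel₀ x h0
  have key' : ∀ x ≥ (0:ℝ), β * Ψ x ≤ x := by
    intro x hx
    rcases eq_or_lt_of_le hx with h | h
    · rw [← h, hΨ0, mul_zero]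
    · exact (key x h).le
  set u : ℕ → ℝ := fun t => s (t + 1) with hu
  have hu0 : u 0 = β * V := by simpa [hu] using hs1
  have hurec : ∀ t, u (t + 1) = β * Ψ (u t) := by
    intro t
    have := hrec (t + 1) (by omega)
    simpa [hu] using this
  have hpos : ∀ t, 0 ≤ u t := by
    intro t
    induction t with
    | zero => rw [hu0]; positivity
    | succ n ih => rw [hurec]; exact mul_nonneg hβ.le (hnonneg _ ih)
  have hanti : Antitone u := by
    apply antitone_nat_of_succ_le
    intro n
    rw [hurec]
    exact key' _ (hpos n)
  have hbdd : BddBelow (Set.range u) := ⟨0, by rintro _ ⟨t, rfl⟩; exact hpos t⟩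
  set L := ⨅ t, u t with hL
  have hconv : Tendsto u atTop (nhds L) := tendsto_atTop_ciInf hanti hbdd
  have hLnn : 0 ≤ L := le_ciInf hpos
  have hconv2 : Tendsto (fun t => u (t + 1)) atTop (nhds L) :=
    hconv.comp (tendsto_add_atTop_nat 1)
  have hΨc : Tendsto (fun t => Ψ (u t)) atTop (nhds (Ψ L)) := by
    have hcw : ContinuousWithinAt Ψ (Set.Ici 0) L := hcont L hLnn
    apply hcw.tendsto.comp
    rw [tendsto_nhdsWithin_iff]
    exact ⟨hconv, Eventually.of_forall hpos⟩
  have hfix : L = β * Ψ L := by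
    have h1 : Tendsto (fun t => β * Ψ (u t)) atTop (nhds (β * Ψ L)) := hΨc.const_mul β
    have h2 : (fun t => u (t + 1)) = fun t => β * Ψ (u t) := funext hurec
    rw [h2] at hconv2
    exact tendsto_nhds_unique hconv2 h1
  have hL0 : L = 0 := by
    by_contra h
    have hLpos : 0 < L := lt_of_le_of_ne hLnn (Ne.symm h)
    have := key L hLpos
    linarith
  rw [← hL0]
  exact (tendsto_add_atTop_iff_nat 1).mp hconv
end

section
/- Let Ψ : [0,∞) → [0,∞) be continuous, nondecreasing, with Ψ(0)=0 and Ψ(σ²) < σ² for σ² > 0. Suppose β ≥ β_max := inf_{σ²>0} σ²/Ψ(σ²) and the infimum is attained at some σ₀² > 0. Then for N₀ = 0 the fixed-point equation σ² = βΨ(σ²) has a solution σ² ≥ σ₀² > 0 when β > β_max; in particular exact recovery (unique fixed point at zero) fails. -/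
/-- If β exceeds the exact recovery threshold β_max, attained at some σ₀² > 0, then
the noiseless fixed-point equation σ² = βΨ(σ²) has a solution σ² ≥ σ₀² > 0; exact
recovery fails. -/
theorem positive_fixed_point_above_ERT
    (Ψ : ℝ → ℝ) (hcont : ContinuousOn Ψ (Set.Ici 0))
    (hmono : ∀ x y, 0 ≤ x → x ≤ y → Ψ x ≤ Ψ y)
    (hnonneg : ∀ x, 0 ≤ x → 0 ≤ Ψ x)
    (hΨ0 : Ψ 0 = 0) (hlt : ∀ x > 0, Ψ x < x)
    (V : ℝ) (hV : ∀ x, 0 ≤ x → Ψ x ≤ V)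
    (βmax : ENNReal)
    (hβmax : βmax = ⨅ x ∈ Set.Ioi (0 : ℝ),
      (if Ψ x = 0 then ⊤ else ENNReal.ofReal (x / Ψ x)))
    (σ0 : ℝ) (hσ0 : 0 < σ0)
    (hattained : (if Ψ σ0 = 0 then ⊤ else ENNReal.ofReal (σ0 / Ψ σ0)) = βmax)
    (β : ℝ) (hβ : βmax < ENNReal.ofReal β) :
    ∃ x : ℝ, σ0 ≤ x ∧ x = β * Ψ x := by
  -- β is positive
  have hβpos : 0 < β := by
    have : (0 : ENNReal) < ENNReal.ofReal β := lt_of_le_of_lt zero_le hβ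
    exact ENNReal.ofReal_pos.mp this
  -- Ψ σ0 ≠ 0
  have hΨσ0 : Ψ σ0 ≠ 0 := by
    intro h
    rw [if_pos h] at hattained
    rw [← hattained] at hβ
    exact (not_top_lt hβ).elim
  have hΨσ0pos : 0 < Ψ σ0 := lt_of_le_of_ne (hnonneg σ0 hσ0.le) (Ne.symm hΨσ0)
  rw [if_neg hΨσ0] at hattained
  -- σ0 / Ψ σ0 < β
  have hdiv : σ0 / Ψ σ0 < β := by
    rw [← hattained] at hβ
    exact (ENNReal.ofReal_lt_ofReal_iff hβpos).mp hβ
  -- hence σ0 < β * Ψ σ0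
  have hstart : σ0 < β * Ψ σ0 := by
    rw [div_lt_iff₀ hΨσ0pos] at hdiv
    linarith
  -- endpoint: choose x₁ = max σ0 (β*V + 1)
  set x₁ : ℝ := max σ0 (β * V + 1) with hx₁def
  have hσ0x₁ : σ0 ≤ x₁ := le_max_left _ _
  have hx₁pos : 0 < x₁ := lt_of_lt_of_le hσ0 hσ0x₁
  have hend : β * Ψ x₁ < x₁ := by
    have h1 : Ψ x₁ ≤ V := hV x₁ hx₁pos.le
    have h2 : β * Ψ x₁ ≤ β * V := mul_le_mul_of_nonneg_left h1 hβpos.le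
    have h3 : β * V + 1 ≤ x₁ := le_max_right _ _
    linarith
  -- IVT for f x = β * Ψ x - x on [σ0, x₁]
  set f : ℝ → ℝ := fun x => β * Ψ x - x with hf
  have hfc : ContinuousOn f (Set.Icc σ0 x₁) := by
    apply ContinuousOn.sub
    · exact (hcont.mono (fun x hx => le_trans hσ0.le hx.1)).const_smul β
    · exact continuousOn_id
  have hmem : (0 : ℝ) ∈ Set.Icc (f x₁) (f σ0) := by
    constructor
    · simp only [hf]; linarith
    · simp only [hf]; linarith
  have := intermediate_value_Icc' hσ0x₁ hfc hmem
  obtain ⟨x, hx, hfx⟩ := this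
  exact ⟨x, hx.1, by simp only [hf] at hfx; linarith⟩
end
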